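/- Let Q be a type A_n quiver with arrows a_1,...,a_{n-1}. Let I=[w,y] and J=[x,z] be intervals with w < x <= y < z, and suppose the arrows a_{x-1} and a_y both point to the right. Then \chi_Q(d_I, d_J) = -1. -/

import Mathlib

/-- For a type `Aₙ` quiver, arrow `aᵢ` joins vertices `i` and `i+1`; `dir i = true`
means `aᵢ` points right.  `tail dir i` is the tail of `aᵢ`. -/
def qtail (dir : ℕ → Bool) (i : ℕ) : ℕ := if dir i then i else i + 1

/-- The head of the arrow `aᵢ`. -/
def qhead (dir : ℕ → Bool) (i : ℕ) : ℕ := if dir i then i + 1 else i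

/-- The indicator dimension vector of the interval `[a,b]`. -/
def ind (a b x : ℕ) : ℤ := if a ≤ x ∧ x ≤ b then 1 else 0

/-- The Euler form of a type `Aₙ` quiver with arrow directions `dir`:
`χ(d₁,d₂) = ∑ₓ d₁(x)d₂(x) - ∑ₐ d₁(t(a))d₂(h(a))`. -/
def euler (n : ℕ) (dir : ℕ → Bool) (d1 d2 : ℕ → ℤ) : ℤ :=
  (∑ x ∈ Finset.Icc 1 n, d1 x * d2 x) -
    ∑ i ∈ Finset.Icc 1 (n - 1), d1 (qtail dir i) * d2 (qhead dir i)

/-- Type (II), both arrows pointing right: for `I=[w,y]`, `J=[x,z]` with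
`w < x ≤ y < z ≤ n` and `a_{x-1}`, `a_y` pointing right, `χ_Q(d_I,d_J) = -1`. -/
theorem euler_typeII_right (n w x y zz : ℕ) (dir : ℕ → Bool)
    (h1 : 1 ≤ w) (h2 : w < x) (h3 : x ≤ y) (h4 : y < zz) (h5 : zz ≤ n)
    (hd1 : dir (x - 1) = true) (hd2 : dir y = true) :
    euler n dir (ind w y) (ind x zz) = -1 := by
  have hx2 : 2 ≤ x := by omega
  unfold euler
  have hA : ∑ t ∈ Finset.Icc 1 n, ind w y t * ind x zz t
      = ∑ t ∈ Finset.Icc 1 n, (if t ∈ Finset.Icc x y then (1:ℤ) else 0) := by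
    apply Finset.sum_congr rfl
    intro t _
    simp only [ind, Finset.mem_Icc]
    by_cases h : x ≤ t ∧ t ≤ y
    · rw [if_pos ⟨by omega, by omega⟩, if_pos ⟨by omega, by omega⟩, if_pos h]; ring
    · rw [if_neg h]
      by_cases h1 : w ≤ t ∧ t ≤ y
      · rw [if_pos h1, if_neg (by omega)]; ring
      · rw [if_neg h1]; ring
  have hB : ∑ i ∈ Finset.Icc 1 (n-1), ind w y (qtail dir i) * ind x zz (qhead dir i)
      = ∑ i ∈ Finset.Icc 1 (n-1), (if i ∈ Finset.Icc (x-1) y then (1:ℤ) else 0) := by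
    apply Finset.sum_congr rfl
    intro i _
    by_cases hd : dir i = true
    · simp only [qtail, qhead, hd, if_true, ind, Finset.mem_Icc]
      by_cases h : x - 1 ≤ i ∧ i ≤ y
      · rw [if_pos ⟨by omega, by omega⟩, if_pos ⟨by omega, by omega⟩, if_pos h]; ring
      · rw [if_neg h]
        by_cases h1 : w ≤ i ∧ i ≤ y
        · rw [if_pos h1, if_neg (by omega)]; ring
        · rw [if_neg h1]; ring
    · have hd' : dir i = false := by simpa using hd
      have hne1 : i ≠ x - 1 := by intro h; rw [h, hd1] at hd'; exact absurd hd' (by simp)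
      have hne2 : i ≠ y := by intro h; rw [h, hd2] at hd'; exact absurd hd' (by simp)
      simp only [qtail, qhead, hd', Bool.false_eq_true, if_false, ind, Finset.mem_Icc]
      by_cases h : x - 1 ≤ i ∧ i ≤ y
      · rw [if_pos ⟨by omega, by omega⟩, if_pos ⟨by omega, by omega⟩, if_pos h]; ring
      · rw [if_neg h]
        by_cases h1 : w ≤ i + 1 ∧ i + 1 ≤ y
        · rw [if_pos h1, if_neg (by omega)]; ring
        · rw [if_neg h1]; ring
  rw [hA, hB, Finset.sum_ite_mem, Finset.sum_ite_mem,
    Finset.inter_eq_right.mpr (Finset.Icc_subset_Icc (by omega) (by omega)),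
    Finset.inter_eq_right.mpr (Finset.Icc_subset_Icc (by omega) (by omega))]
  simp only [Finset.sum_const, Nat.card_Icc, nsmul_eq_mul, mul_one]
  omega
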